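/- Let μ be the unique Borel probability measure on ℝ such that if Y has law μ and U is uniform on [0,1] independent of Y, then U·Y + U·(1−U) has law μ. Then μ is supported by the unit interval, i.e., μ([0,1]) = 1. -/

import Mathlib

open MeasureTheory
open scoped ENNReal

/-- The unique solution `μ` of the fixed-point equation `Y =_d U·Y + U·(1−U)`
(with `U` uniform on `[0,1]`, independent of `Y`) is supported by `[0,1]`. -/
theorem fixed_point_supported_on_unit_interval (μ : Measure ℝ)
    (hprob : IsProbabilityMeasure μ)
    (hfix : Measure.map (fun p : ℝ × ℝ => p.2 * p.1 + p.2 * (1 - p.2))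
      (μ.prod (volume.restrict (Set.Icc (0:ℝ) 1))) = μ) :
    μ (Set.Icc (0:ℝ) 1) = 1 := by
  have hT : Measurable (fun p : ℝ × ℝ => p.2 * p.1 + p.2 * (1 - p.2)) := by fun_prop
  set ν : Measure ℝ := volume.restrict (Set.Icc (0:ℝ) 1) with hνdef
  have hνuniv : ν Set.univ = 1 := by
    simp [hνdef, Real.volume_Icc]
  have hνprob : IsProbabilityMeasure ν := ⟨hνuniv⟩
  have hUmeas : ∀ y : ℝ, Measurable fun u : ℝ => u * y + u * (1 - u) := by
    intro y; fun_prop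
  have key : ∀ S : Set ℝ, MeasurableSet S →
      μ S = ∫⁻ y, ν {u | u * y + u * (1 - u) ∈ S} ∂μ := by
    intro S hS
    conv_lhs => rw [← hfix]
    rw [Measure.map_apply hT hS, Measure.prod_apply (hT hS)]
    rfl
  set A : Set ℝ := Set.Icc 0 1 with hAdef
  have hA : MeasurableSet A := measurableSet_Icc
  set g : ℝ → ℝ≥0∞ := fun y => ν {u | u * y + u * (1 - u) ∈ A} with hgdef
  have hgmeas : Measurable g :=
    measurable_measure_prodMk_left (hT hA)
  have hg1 : ∀ y ∈ A, g y = 1 := by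
    intro y hy
    refine le_antisymm prob_le_one ?_
    obtain ⟨hy0, hy1⟩ := hy
    have hsub : Set.Icc (0:ℝ) 1 ⊆ {u | u * y + u * (1 - u) ∈ A} := by
      intro u hu
      obtain ⟨hu0, hu1⟩ := hu
      constructor
      · nlinarith
      · nlinarith
    have h1 : (1:ℝ≥0∞) = ν (Set.Icc (0:ℝ) 1) := by
      simp [hνdef, hAdef, Real.volume_Icc]
    rw [h1]
    exact measure_mono hsub
  have hgpos : ∀ y : ℝ, -1 < y → 0 < g y := by
    intro y hy
    set ε : ℝ := min (min (y + 1) (y + 1)⁻¹) 1 with hεdef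
    have hy1 : (0:ℝ) < y + 1 := by linarith
    have hε0 : 0 < ε := lt_min (lt_min hy1 (inv_pos.mpr hy1)) one_pos
    have hε1 : ε ≤ 1 := min_le_right _ _
    have hεa : ε ≤ y + 1 := (min_le_left _ _).trans (min_le_left _ _)
    have hεb : ε ≤ (y + 1)⁻¹ := (min_le_left _ _).trans (min_le_right _ _)
    have hεy : ε * (y + 1) ≤ 1 := by
      calc ε * (y + 1) ≤ (y + 1)⁻¹ * (y + 1) := mul_le_mul_of_nonneg_right hεb hy1.le
        _ = 1 := inv_mul_cancel₀ hy1.ne'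
    have hsub : Set.Icc (0:ℝ) ε ⊆ {u | u * y + u * (1 - u) ∈ A} := by
      intro u hu
      obtain ⟨hu0, huε⟩ := hu
      have hyu : 0 ≤ y + 1 - u := by linarith
      constructor
      · nlinarith [mul_nonneg hu0 hyu]
      · have huy : u * (y + 1) ≤ ε * (y + 1) := mul_le_mul_of_nonneg_right huε hy1.le
        nlinarith [sq_nonneg u]
    calc (0:ℝ≥0∞) < ENNReal.ofReal ε := by simpa using hε0
      _ = ν (Set.Icc 0 ε) := by
          rw [hνdef, Measure.restrict_apply measurableSet_Icc,
            Set.inter_eq_self_of_subset_left (Set.Icc_subset_Icc le_rfl hε1),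
            Real.volume_Icc, sub_zero]
      _ ≤ g y := measure_mono hsub
  -- Step A : the set Aᶜ ∩ (-1, ∞) is null
  have hμA : μ A = ∫⁻ y, g y ∂μ := key A hA
  have hAeq : ∫⁻ y in A, g y ∂μ = μ A := by
    rw [setLIntegral_congr_fun hA (fun y hy => hg1 y hy)]
    simp
  have hcompl0 : ∫⁻ y in Aᶜ, g y ∂μ = 0 := by
    have hsum : ∫⁻ y in A, g y ∂μ + ∫⁻ y in Aᶜ, g y ∂μ = ∫⁻ y, g y ∂μ :=
      lintegral_add_compl g hA
    rw [hAeq, ← hμA] at hsum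
    have hfin : μ A ≠ ⊤ := measure_ne_top μ A
    nth_rewrite 2 [← add_zero (μ A)] at hsum
    exact (ENNReal.add_right_inj hfin).mp hsum
  have hg_ae : ∀ᵐ y ∂μ, y ∈ Aᶜ → g y = 0 :=
    (ae_restrict_iff' hA.compl).mp ((lintegral_eq_zero_iff hgmeas).mp hcompl0)
  have hμC : μ (Aᶜ ∩ Set.Ioi (-1:ℝ)) = 0 := by
    rw [ae_iff] at hg_ae
    refine measure_mono_null ?_ hg_ae
    rintro y ⟨hyA, hy1⟩
    simp only [Set.mem_setOf_eq]
    exact fun hcon => absurd (hcon hyA) (hgpos y hy1).ne'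
  -- Step B : the set (-∞, -1] is null
  set B : Set ℝ := Set.Iic (-1:ℝ) with hBdef
  have hB : MeasurableSet B := measurableSet_Iic
  set hfun : ℝ → ℝ≥0∞ := fun y => ν {u | u * y + u * (1 - u) ∈ B} with hhdef
  have hμB : μ B = ∫⁻ y, hfun y ∂μ := key B hB
  have hB0 : ∀ y ∈ Bᶜ, hfun y = 0 := by
    intro y hy
    have hy1 : -1 < y := by simpa [hBdef] using hy
    have hempty : {u | u * y + u * (1 - u) ∈ B} ∩ A = ∅ := by
      rw [Set.eq_empty_iff_forall_notMem]
      rintro u ⟨hmem, hu⟩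
      rw [hAdef] at hu
      obtain ⟨hu0, hu1⟩ := hu
      simp only [hBdef, Set.mem_setOf_eq, Set.mem_Iic] at hmem
      rcases eq_or_lt_of_le hu0 with h0 | h0
      · rw [← h0] at hmem; norm_num at hmem
      · have hpos : 0 < u * (y + 1) := mul_pos h0 (by linarith)
        have hu2 : u * u ≤ 1 := by nlinarith
        nlinarith
    show ν {u | u * y + u * (1 - u) ∈ B} = 0
    rw [hνdef, Measure.restrict_apply' hA, hempty, measure_empty]
  set f : ℝ → ℝ≥0∞ := fun y => ENNReal.ofReal (-y)⁻¹ with hfdef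
  have hf_meas : Measurable f := by
    apply Measurable.ennreal_ofReal
    exact measurable_neg.inv
  have hf_le_one : ∀ y ∈ B, f y ≤ 1 := by
    intro y hy
    have : (-y)⁻¹ ≤ 1 := by
      have hy' : y ≤ -1 := hy
      rw [inv_le_one_iff₀]
      right; linarith
    calc f y ≤ ENNReal.ofReal 1 := ENNReal.ofReal_le_ofReal this
      _ = 1 := by norm_num
  have hbound : ∀ y ∈ B, hfun y ≤ 1 - f y := by
    intro y hy
    have hy1 : y ≤ -1 := hy
    have hyneg : (0:ℝ) < -y := by linarith
    set c : ℝ := (-y)⁻¹ with hcdef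
    have hc0 : 0 < c := inv_pos.mpr hyneg
    have hc1 : c ≤ 1 := by
      rw [hcdef, inv_le_one_iff₀]; right; linarith
    have hSm : MeasurableSet {u : ℝ | u * y + u * (1 - u) ∈ B} := (hUmeas y) hB
    have hsub : Set.Ioo 0 c ⊆ {u : ℝ | u * y + u * (1 - u) ∈ B}ᶜ := by
      rintro u ⟨hu0, huc⟩
      simp only [Set.mem_compl_iff, Set.mem_setOf_eq, hBdef, Set.mem_Iic, not_le]
      have h1 : u * (-y) < 1 := by
        have := mul_lt_mul_of_pos_right huc hyneg
        rwa [hcdef, inv_mul_cancel₀ hyneg.ne'] at this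
      have hu1 : u ≤ 1 := le_trans huc.le hc1
      nlinarith [mul_nonneg hu0.le (sub_nonneg.mpr hu1)]
    have hge : ENNReal.ofReal c ≤ ν {u : ℝ | u * y + u * (1 - u) ∈ B}ᶜ := by
      calc ENNReal.ofReal c = ν (Set.Ioo 0 c) := by
            rw [hνdef, Measure.restrict_apply measurableSet_Ioo,
              Set.inter_eq_self_of_subset_left (Set.Ioo_subset_Icc_self.trans
                (Set.Icc_subset_Icc le_rfl hc1)),
              Real.volume_Ioo, sub_zero]
        _ ≤ _ := measure_mono hsub
    have heq : hfun y = 1 - ν {u : ℝ | u * y + u * (1 - u) ∈ B}ᶜ := by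
      rw [hhdef]
      have := prob_compl_eq_one_sub (μ := ν) hSm.compl
      rwa [compl_compl] at this
    rw [heq, hfdef]
    exact tsub_le_tsub_left hge 1
  have hBc0 : ∫⁻ y in Bᶜ, hfun y ∂μ = 0 := by
    rw [setLIntegral_congr_fun hB.compl hB0]
    simp
  have hsplitB : ∫⁻ y in B, hfun y ∂μ = μ B := by
    have hsum : ∫⁻ y in B, hfun y ∂μ + ∫⁻ y in Bᶜ, hfun y ∂μ = ∫⁻ y, hfun y ∂μ :=
      lintegral_add_compl hfun hB
    rw [hBc0, add_zero, ← hμB] at hsum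
    exact hsum
  have hle : μ B ≤ ∫⁻ y in B, (1 - f y) ∂μ := by
    rw [← hsplitB]
    refine setLIntegral_mono' hB ?_  -- might not exist; fallback below
    exact hbound
  have hsum2 : ∫⁻ y in B, (1 - f y) ∂μ + ∫⁻ y in B, f y ∂μ = μ B := by
    have hone : ∫⁻ y in B, ((1 - f y) + f y) ∂μ = μ B := by
      rw [setLIntegral_congr_fun hB
        (fun y hy => tsub_add_cancel_of_le (hf_le_one y hy))]
      simp
    rw [← hone, lintegral_add_right _ hf_meas]
  have hntop : ∫⁻ y in B, (1 - f y) ∂μ ≠ ⊤ := by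
    have h1 : ∫⁻ y in B, (1 - f y) ∂μ ≤ ∫⁻ _ in B, 1 ∂μ :=
      lintegral_mono fun y => tsub_le_self
    simp only [setLIntegral_one] at h1
    exact ne_top_of_le_ne_top (measure_ne_top μ B) h1
  have hfB : ∫⁻ y in B, f y ∂μ = 0 := by
    by_contra h0
    have hlt : ∫⁻ y in B, (1 - f y) ∂μ < ∫⁻ y in B, (1 - f y) ∂μ + ∫⁻ y in B, f y ∂μ :=
      ENNReal.lt_add_right hntop h0
    rw [hsum2] at hlt
    exact absurd hle (not_le.mpr hlt)
  have hμB0 : μ B = 0 := by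
    have hae : ∀ᵐ y ∂μ, y ∈ B → f y = 0 :=
      (ae_restrict_iff' hB).mp ((lintegral_eq_zero_iff hf_meas).mp hfB)
    rw [ae_iff] at hae
    refine measure_mono_null ?_ hae
    intro y hy
    simp only [Set.mem_setOf_eq]
    intro hcon
    have hypos : (0:ℝ) < (-y)⁻¹ := inv_pos.mpr (by simp only [hBdef, Set.mem_Iic] at hy; linarith)
    exact absurd (hcon hy) (ENNReal.ofReal_pos.mpr hypos).ne'
  -- Conclusion
  have huniv : (Set.univ : Set ℝ) ⊆ A ∪ ((Aᶜ ∩ Set.Ioi (-1:ℝ)) ∪ B) := by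
    intro y _
    by_cases hyA : y ∈ A
    · exact Or.inl hyA
    · by_cases hy1 : -1 < y
      · exact Or.inr (Or.inl ⟨hyA, hy1⟩)
      · exact Or.inr (Or.inr (le_of_not_gt hy1))
  refine le_antisymm prob_le_one ?_
  calc (1:ℝ≥0∞) = μ Set.univ := measure_univ.symm
    _ ≤ μ (A ∪ ((Aᶜ ∩ Set.Ioi (-1:ℝ)) ∪ B)) := measure_mono huniv
    _ ≤ μ A + μ ((Aᶜ ∩ Set.Ioi (-1:ℝ)) ∪ B) := measure_union_le _ _
    _ ≤ μ A + (μ (Aᶜ ∩ Set.Ioi (-1:ℝ)) + μ B) := add_le_add le_rfl (measure_union_le _ _)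
    _ = μ A := by rw [hμC, hμB0]; simp
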